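/- Let (x*, z*, b*) with b* > 0 be a fixed point of the RAMP update equations, meaning x* = η(x* + Aᵀ G(z*; b*); θ) and z* = Y − A x* + (1/δ)·G(z*; b*)·⟨∂₁η(x* + Aᵀ G(z*; b*); θ)⟩, where G(z;b) = (δ/ω)Φ(z;b). Then the vector x* satisfies the KKT condition of the ℓ₁-penalized M-estimation problem min_x Σᵢ ρ(Yᵢ − Aᵢᵀx) + λ‖x‖₁ with λ = θ·ω/(b*·δ): there exists v ∈ ∂‖x*‖₁ with Aᵀρ'(Y − A x*) = λ v. -/

import Mathlib

/-- The soft thresholding function η(x,θ) = sign(x)·max(|x|-θ,0). -/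
noncomputable def eta (x θ : ℝ) : ℝ := Real.sign x * max (|x| - θ) 0

lemma eta_zero_of_le {s θ : ℝ} (h : |s| ≤ θ) : eta s θ = 0 := by
  simp [eta, max_eq_right (by linarith : |s| - θ ≤ 0)]

lemma abs_sign_eq_one {x : ℝ} (hx : x ≠ 0) : |Real.sign x| = 1 := by
  rcases lt_trichotomy x 0 with h | h | h
  · simp [Real.sign_of_neg h]
  · exact absurd h hx
  · simp [Real.sign_of_pos h]

lemma eta_props {s θ : ℝ} (hθ : 0 < θ) (h : θ < |s|) :
    s - eta s θ = θ * Real.sign s ∧ Real.sign (eta s θ) = Real.sign s ∧ eta s θ ≠ 0 := by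
  rcases lt_trichotomy s 0 with hs | hs | hs
  · have habs : |s| = -s := abs_of_neg hs
    have hsign : Real.sign s = -1 := Real.sign_of_neg hs
    have hmax : max (|s| - θ) 0 = -s - θ := by
      rw [habs]; exact max_eq_left (by linarith [habs ▸ h])
    have heta : eta s θ = s + θ := by
      simp [eta, hsign, hmax]; ring
    have hneg : eta s θ < 0 := by rw [heta]; have := habs ▸ h; linarith [abs_of_neg hs ▸ h]
    refine ⟨by rw [heta, hsign]; ring, by rw [Real.sign_of_neg hneg, hsign], ne_of_lt hneg⟩
  · simp [hs, abs_zero] at h; linarith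
  · have habs : |s| = s := abs_of_pos hs
    have hsign : Real.sign s = 1 := Real.sign_of_pos hs
    have hmax : max (|s| - θ) 0 = s - θ := by
      rw [habs]; exact max_eq_left (by linarith [habs ▸ h])
    have heta : eta s θ = s - θ := by simp [eta, hsign, hmax]
    have hpos : 0 < eta s θ := by rw [heta]; have := habs ▸ h; linarith
    refine ⟨by rw [heta, hsign]; ring, by rw [Real.sign_of_pos hpos, hsign], ne_of_gt hpos⟩

lemma eta_ne_zero_iff {s θ : ℝ} (hθ : 0 < θ) : eta s θ ≠ 0 ↔ θ < |s| := by
  constructor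
  · intro h; by_contra hle; exact h (eta_zero_of_le (not_lt.mp hle))
  · intro h; exact (eta_props hθ h).2.2

/-- A fixed point (x*, z*, b*) of the RAMP equations yields a solution of the KKT
conditions of the ℓ₁-penalized M-estimation problem with λ = θ·ω/(b*·δ):
there is v ∈ ∂‖x*‖₁ with Aᵀ ρ'(Y - A x*) = λ v. Here G(z;b) = (δ/ω)·Φ(z;b),
Φ(z;b*) = b*·ρ'(Prox(z,b*)) with z - Prox z = Φ(z;b*), the Onsager term is the
average of ∂₁η over coordinates, which at a fixed point equals ‖x*‖₀/p = ω. -/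
theorem stmt_12 (n p : ℕ) (hp : 0 < p)
    (A : Matrix (Fin n) (Fin p) ℝ) (Y : Fin n → ℝ)
    (ρ ρ' : ℝ → ℝ) (hρ : ConvexOn ℝ Set.univ ρ)
    (hsub : ∀ u w : ℝ, ρ w ≥ ρ u + ρ' u * (w - u))
    (Prox : ℝ → ℝ) (bstar : ℝ) (hb : 0 < bstar)
    (hProx : ∀ z : ℝ, z - Prox z = bstar * ρ' (Prox z))
    (δ ω θ : ℝ) (hδ : 0 < δ) (hω : 0 < ω) (hθ : 0 < θ)
    (xstar : Fin p → ℝ) (zstar : Fin n → ℝ)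
    (G : ℝ → ℝ) (hG : ∀ z, G z = (δ / ω) * (bstar * ρ' (Prox z)))
    (hfix1 : ∀ j, xstar j =
      eta (xstar j + (A.transpose.mulVec fun i => G (zstar i)) j) θ)
    (hfix2 : ∀ i, zstar i = Y i - A.mulVec xstar i
      + (1 / δ) * G (zstar i) *
        ((1 / p : ℝ) * ∑ j,
          (if θ < |xstar j + (A.transpose.mulVec fun i => G (zstar i)) j|
            then (1 : ℝ) else 0)))
    (hcard : (((Finset.univ.filter fun j => xstar j ≠ 0).card : ℝ) / p) = ω) :
    ∃ v : Fin p → ℝ, (∀ j, |v j| ≤ 1) ∧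
      (∀ j, xstar j ≠ 0 → v j = Real.sign (xstar j)) ∧
      (A.transpose.mulVec fun i => ρ' (Y i - A.mulVec xstar i))
        = fun j => (θ * ω / (bstar * δ)) * v j := by
  set t : Fin p → ℝ := A.transpose.mulVec fun i => G (zstar i) with ht
  -- the average is ω
  have hcond : ∀ j, (θ < |xstar j + t j|) ↔ xstar j ≠ 0 := by
    intro j
    have h := eta_ne_zero_iff (s := xstar j + t j) hθ
    rw [← hfix1 j] at h
    exact h.symm
  have havg : (1 / p : ℝ) * ∑ j, (if θ < |xstar j + t j| then (1:ℝ) else 0) = ω := by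
    have hfil : (Finset.univ.filter fun j => θ < |xstar j + t j|)
        = (Finset.univ.filter fun j => xstar j ≠ 0) :=
      Finset.filter_congr (fun j _ => by simpa using hcond j)
    rw [Finset.sum_boole, hfil, ← hcard]
    ring
  -- Prox zstar i = residual
  have hprox_eq : ∀ i, Prox (zstar i) = Y i - A.mulVec xstar i := by
    intro i
    have h2 := hfix2 i
    have honsager : (1 / δ) * G (zstar i) *
        ((1 / p : ℝ) * ∑ j, (if θ < |xstar j + t j| then (1:ℝ) else 0))
        = zstar i - Prox (zstar i) := by
      rw [havg, hG, hProx]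
      field_simp
    have h3 : zstar i = Y i - A.mulVec xstar i + (zstar i - Prox (zstar i)) := by
      rw [← honsager]; exact h2
    linarith
  have hrho : ∀ i, ρ' (Y i - A.mulVec xstar i) = (ω / (δ * bstar)) * G (zstar i) := by
    intro i
    rw [← hprox_eq i, hG]
    field_simp
  -- the subgradient vector
  refine ⟨fun j => t j / θ, ?_, ?_, ?_⟩
  · intro j
    show |t j / θ| ≤ 1
    have h1 := hfix1 j
    have habs : |t j| ≤ θ := by
      by_cases hc : θ < |xstar j + t j|
      · have he := (eta_props hθ hc).1
        rw [← hfix1 j] at he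
        have hx : t j = θ * Real.sign (xstar j + t j) := by linarith
        rw [hx, abs_mul, abs_of_pos hθ]
        have hs0 : xstar j + t j ≠ 0 := by
          intro h0; rw [h0] at hc; simp at hc; linarith
        rw [abs_sign_eq_one hs0, mul_one]
      · push_neg at hc
        have hx0 : xstar j = 0 := by rw [h1]; exact eta_zero_of_le hc
        have h4 : t j = xstar j + t j := by rw [hx0]; ring
        rw [h4]; exact hc
    rw [abs_div, abs_of_pos hθ]
    exact div_le_one_of_le₀ habs (le_of_lt hθ)
  · intro j hne
    show t j / θ = Real.sign (xstar j)
    have hc : θ < |xstar j + t j| := (hcond j).mpr hne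
    obtain ⟨heq, hsg, _⟩ := eta_props hθ hc
    rw [← hfix1 j] at heq hsg
    have hx : t j = θ * Real.sign (xstar j + t j) := by linarith
    have hsx : Real.sign (xstar j) = Real.sign (xstar j + t j) := hsg
    rw [hx, hsx]
    field_simp
  · funext j
    have hfun : (fun i => ρ' (Y i - A.mulVec xstar i))
        = (ω / (δ * bstar)) • fun i => G (zstar i) := by
      funext i
      simp only [Pi.smul_apply, smul_eq_mul]
      exact hrho i
    show (A.transpose.mulVec fun i => ρ' (Y i - A.mulVec xstar i)) j
        = (θ * ω / (bstar * δ)) * (t j / θ)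
    rw [hfun, Matrix.mulVec_smul]
    simp only [Pi.smul_apply, smul_eq_mul, ← ht]
    field_simp
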